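/- arXiv:2303.02308 — 3 statements merged into one kernel-verified Lean document; each statement's English description precedes it below -/
import Mathlib

section
/- Let P (the set of propagation paths) and K (the set of antenna elements) be finite nonempty index sets with |K| = n, let ρ ≥ 0 (transmit power), σ ≥ 0, and let g : P → ℝ (antenna gains) and ψ : P × K → ℝ (deterministic per-path per-antenna phases, encoding array geometry and beamforming weights) be given. On a probability space let (α_p)_{p∈P} be nonnegative integrable random variables, let (ω_p)_{p∈P} be i.i.d. with the uniform distribution on [-π, π], and let (ε_k)_{k∈K} be i.i.d. with distribution N(0, σ²), such that the three families (α_p), (ω_p), (ε_k) are mutually independent. Define the random variable rsrp = ρ·[(Σ_{p∈P} √(α_p)·g_p·Σ_{k∈K} cos(ψ_{p,k} + ω_p + ε_k))² + (Σ_{p∈P} √(α_p)·g_p·Σ_{k∈K} sin(ψ_{p,k} + ω_p + ε_k))²]. Then E[rsrp] = Σ_{p∈P} A_p · E[α_p], where A_p = ρ·g_p²·( n·(1 − e^{−σ²}) + e^{−σ²}·Σ_{k∈K} Σ_{l∈K} cos(ψ_{p,k} − ψ_{p,l}) ). -/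
open MeasureTheory ProbabilityTheory Real
open scoped NNReal ENNReal

/-- The uniform distribution on `[-π, π]`: density `1/(2π)` on the interval, zero elsewhere. -/
noncomputable def uniformNegPiPi : Measure ℝ :=
  ENNReal.ofReal (1 / (2 * Real.pi)) • (volume.restrict (Set.Icc (-Real.pi) Real.pi))

lemma integral_cos_add_uniform (c : ℝ) : ∫ x, Real.cos (c + x) ∂uniformNegPiPi = 0 := by
  rw [uniformNegPiPi, integral_smul_measure]
  have h1 : ∫ x in Set.Icc (-Real.pi) Real.pi, Real.cos (c + x) =
      ∫ x in (-Real.pi)..Real.pi, Real.cos (c + x) := by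
    rw [intervalIntegral.integral_of_le (by linarith [Real.pi_pos]),
      MeasureTheory.integral_Icc_eq_integral_Ioc]
  rw [h1, intervalIntegral.integral_comp_add_left (fun x => Real.cos x) c, integral_cos]
  have : c + -Real.pi = c - Real.pi := by ring
  rw [this, Real.sin_add_pi, Real.sin_sub_pi]
  simp

lemma int_cos_exp {v : ℝ} (hv : 0 < v) :
    Integrable (fun x : ℝ => Real.cos x * Real.exp (-(2*v)⁻¹ * x^2)) := by
  have hb : (0:ℝ) < (2*v)⁻¹ := by positivity
  refine (integrable_exp_neg_mul_sq hb).mono' ?_ ?_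
  · exact (Real.continuous_cos.mul (by continuity)).aestronglyMeasurable
  · refine Filter.Eventually.of_forall fun x => ?_
    rw [Real.norm_eq_abs, abs_mul]
    calc |Real.cos x| * |Real.exp (-(2*v)⁻¹ * x^2)|
        ≤ 1 * |Real.exp (-(2*v)⁻¹ * x^2)| := by
          gcongr; exact Real.abs_cos_le_one x
      _ = Real.exp (-(2*v)⁻¹ * x^2) := by rw [one_mul, abs_of_pos (Real.exp_pos _)]

lemma int_sin_exp {v : ℝ} (hv : 0 < v) :
    Integrable (fun x : ℝ => Real.sin x * Real.exp (-(2*v)⁻¹ * x^2)) := by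
  have hb : (0:ℝ) < (2*v)⁻¹ := by positivity
  refine (integrable_exp_neg_mul_sq hb).mono' ?_ ?_
  · exact (Real.continuous_sin.mul (by continuity)).aestronglyMeasurable
  · refine Filter.Eventually.of_forall fun x => ?_
    rw [Real.norm_eq_abs, abs_mul]
    calc |Real.sin x| * |Real.exp (-(2*v)⁻¹ * x^2)|
        ≤ 1 * |Real.exp (-(2*v)⁻¹ * x^2)| := by
          gcongr; exact Real.abs_sin_le_one x
      _ = Real.exp (-(2*v)⁻¹ * x^2) := by rw [one_mul, abs_of_pos (Real.exp_pos _)]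

lemma gauss_cos_sin {v : ℝ} (hv : 0 < v) :
    (∫ x : ℝ, Real.cos x * Real.exp (-(2*v)⁻¹ * x^2)) = Real.sqrt (2*Real.pi*v) * Real.exp (-v/2)
    ∧ (∫ x : ℝ, Real.sin x * Real.exp (-(2*v)⁻¹ * x^2)) = 0 := by
  have hb : (0:ℝ) < (2*v)⁻¹ := by positivity
  set b : ℂ := (((2*v)⁻¹ : ℝ) : ℂ) with hbdef
  have hbre : 0 < b.re := by simpa [hbdef] using hb
  have h := fourierIntegral_gaussian hbre 1
  have hfun : ∀ x : ℝ, Complex.exp (Complex.I * 1 * x) * Complex.exp (-b * x ^ 2) =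
      ((Real.cos x * Real.exp (-(2*v)⁻¹ * x^2) : ℝ) : ℂ)
        + ((Real.sin x * Real.exp (-(2*v)⁻¹ * x^2) : ℝ) : ℂ) * Complex.I := by
    intro x
    have h1 : Complex.I * 1 * x = (x : ℂ) * Complex.I := by ring
    have h2 : -b * (x:ℂ) ^ 2 = ((-(2*v)⁻¹ * x^2 : ℝ) : ℂ) := by
      rw [hbdef]; push_cast; ring
    rw [h1, h2, Complex.exp_mul_I, ← Complex.ofReal_exp, ← Complex.ofReal_cos,
      ← Complex.ofReal_sin]
    push_cast
    ring
  have hint1 := int_cos_exp hv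
  have hint2 := int_sin_exp hv
  have hL : (∫ x : ℝ, Complex.exp (Complex.I * 1 * x) * Complex.exp (-b * x ^ 2)) =
      ((∫ x : ℝ, Real.cos x * Real.exp (-(2*v)⁻¹ * x^2) : ℝ) : ℂ)
        + ((∫ x : ℝ, Real.sin x * Real.exp (-(2*v)⁻¹ * x^2) : ℝ) : ℂ) * Complex.I := by
    rw [show (fun x : ℝ => Complex.exp (Complex.I * 1 * x) * Complex.exp (-b * x ^ 2)) =
        fun x : ℝ => ((Real.cos x * Real.exp (-(2*v)⁻¹ * x^2) : ℝ) : ℂ)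
          + ((Real.sin x * Real.exp (-(2*v)⁻¹ * x^2) : ℝ) : ℂ) * Complex.I
      from funext hfun]
    rw [integral_add]
    · have e1 : (∫ a : ℝ, ((Real.cos a * Real.exp (-(2*v)⁻¹*a^2) : ℝ) : ℂ)) =
          ((∫ a : ℝ, Real.cos a * Real.exp (-(2*v)⁻¹*a^2) : ℝ) : ℂ) := integral_ofReal
      have e2 : (∫ a : ℝ, ((Real.sin a * Real.exp (-(2*v)⁻¹*a^2) : ℝ) : ℂ)) =
          ((∫ a : ℝ, Real.sin a * Real.exp (-(2*v)⁻¹*a^2) : ℝ) : ℂ) := integral_ofReal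
      rw [integral_mul_const, e1, e2]
    · exact hint1.ofReal
    · exact (hint2.ofReal).mul_const Complex.I
  have hR : ((Real.pi : ℂ) / b) ^ (1/2 : ℂ) * Complex.exp (-1 ^ 2 / (4 * b)) =
      ((Real.sqrt (2*Real.pi*v) * Real.exp (-v/2) : ℝ) : ℂ) := by
    have hb0 : b ≠ 0 := by
      simp only [hbdef, ne_eq, Complex.ofReal_eq_zero]
      positivity
    have h3 : (Real.pi : ℂ) / b = ((2*Real.pi*v : ℝ) : ℂ) := by
      rw [hbdef]
      push_cast
      field_simp
    have h4 : (-1 ^ 2 / (4 * b) : ℂ) = ((-v/2 : ℝ) : ℂ) := by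
      rw [hbdef]
      push_cast
      field_simp
      ring
    rw [h3, h4, ← Complex.ofReal_exp]
    have h5 : ((2*Real.pi*v : ℝ) : ℂ) ^ (1/2 : ℂ) = ((Real.sqrt (2*Real.pi*v) : ℝ) : ℂ) := by
      have hnn : (0:ℝ) ≤ 2*Real.pi*v := by positivity
      rw [show (1/2 : ℂ) = ((1/2 : ℝ) : ℂ) by norm_num, ← Complex.ofReal_cpow hnn]
      norm_cast
      rw [← Real.sqrt_eq_rpow]
    rw [h5, ← Complex.ofReal_mul]
  rw [hL, hR] at h
  simp only [Complex.ext_iff, Complex.add_re, Complex.add_im, Complex.ofReal_re,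
    Complex.ofReal_im, Complex.mul_re, Complex.mul_im, Complex.I_re, Complex.I_im] at h
  constructor
  · linarith [h.1]
  · linarith [h.2]

lemma integral_cos_add_gaussian (v : ℝ≥0) (c : ℝ) :
    ∫ x, Real.cos (c + x) ∂(gaussianReal 0 v) = Real.cos c * Real.exp (-(v:ℝ)/2) := by
  by_cases hv : v = 0
  · subst hv
    rw [gaussianReal_zero_var, integral_dirac]
    simp
  · have hv' : (0:ℝ) < (v:ℝ) := by positivity
    rw [gaussianReal_of_var_ne_zero 0 hv]
    have hpdf : gaussianPDF 0 v = fun x => ((Real.toNNReal (gaussianPDFReal 0 v x) : ℝ≥0) : ℝ≥0∞) := rfl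
    rw [hpdf, integral_withDensity_eq_integral_smul
      ((measurable_gaussianPDFReal 0 v).real_toNNReal) _]
    have hsq : Real.sqrt (2*Real.pi*(v:ℝ)) ≠ 0 := by positivity
    calc ∫ x, (Real.toNNReal (gaussianPDFReal 0 v x)) • Real.cos (c + x)
        = ∫ x : ℝ, (Real.sqrt (2*Real.pi*(v:ℝ)))⁻¹ *
            (Real.cos c * (Real.cos x * Real.exp (-(2*(v:ℝ))⁻¹ * x^2))
              - Real.sin c * (Real.sin x * Real.exp (-(2*(v:ℝ))⁻¹ * x^2))) := by
          congr 1
          funext x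
          rw [NNReal.smul_def, Real.coe_toNNReal _ (gaussianPDFReal_nonneg _ _ _),
            gaussianPDFReal]
          have he : -(x - 0)^2/(2*(v:ℝ)) = -(2*(v:ℝ))⁻¹ * x^2 := by
            field_simp
            ring
          rw [he, Real.cos_add]
          simp only [smul_eq_mul]
          ring
      _ = (Real.sqrt (2*Real.pi*(v:ℝ)))⁻¹ *
            ((Real.cos c * ∫ x : ℝ, Real.cos x * Real.exp (-(2*(v:ℝ))⁻¹ * x^2))
              - Real.sin c * ∫ x : ℝ, Real.sin x * Real.exp (-(2*(v:ℝ))⁻¹ * x^2)) := by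
          rw [integral_const_mul, integral_sub ((int_cos_exp hv').const_mul _)
            ((int_sin_exp hv').const_mul _), integral_const_mul, integral_const_mul]
      _ = Real.cos c * Real.exp (-(v:ℝ)/2) := by
          rw [(gauss_cos_sin hv').1, (gauss_cos_sin hv').2]
          field_simp
          ring

lemma sum_ite_helper {K : Type*} [Fintype K] [DecidableEq K] (E : ℝ) (d : K → K → ℝ) (hd : ∀ k, d k k = 1) :
    ∑ k : K, ∑ l : K, (if k = l then (1:ℝ) else E * d k l) =
      (Fintype.card K : ℝ) * (1 - E) + E * ∑ k : K, ∑ l : K, d k l := by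
  have h1 : ∀ k l : K, (if k = l then (1:ℝ) else E * d k l)
      = (if k = l then 1 - E else 0) + E * d k l := by
    intro k l
    by_cases h : k = l
    · subst h; rw [if_pos rfl, if_pos rfl, hd]; ring
    · rw [if_neg h, if_neg h]; ring
  simp_rw [h1, Finset.sum_add_distrib, ← Finset.mul_sum]
  congr 1
  simp [Finset.sum_ite_eq, Finset.card_univ, mul_comm]
  ring

lemma rsrp_expand {P K : Type*} [Fintype P] [Fintype K] (ρ : ℝ) (a : P → ℝ) (g : P → ℝ)
    (θ : P → K → ℝ) :
    ρ * ((∑ p, a p * g p * ∑ k, Real.cos (θ p k))^2 + (∑ p, a p * g p * ∑ k, Real.sin (θ p k))^2)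
    = ∑ p, ∑ q, ∑ k, ∑ l, ρ * (g p * g q) * ((a p * a q) * Real.cos (θ p k - θ q l)) := by
  have hc : ∀ (d : P → K → ℝ), (∑ p, a p * g p * ∑ k, d p k)^2
      = ∑ p, ∑ q, ∑ k, ∑ l, (a p * g p) * (a q * g q) * (d p k * d q l) := by
    intro d
    rw [sq, Finset.sum_mul_sum]
    refine Finset.sum_congr rfl fun p _ => Finset.sum_congr rfl fun q _ => ?_
    calc (a p * g p * ∑ k, d p k) * (a q * g q * ∑ l, d q l)
        = (a p * g p) * (a q * g q) * ((∑ k, d p k) * (∑ l, d q l)) := by ring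
      _ = (a p * g p) * (a q * g q) * (∑ k, ∑ l, d p k * d q l) := by rw [Finset.sum_mul_sum]
      _ = ∑ k, ∑ l, (a p * g p) * (a q * g q) * (d p k * d q l) := by
          rw [Finset.mul_sum]
          exact Finset.sum_congr rfl fun k _ => by rw [Finset.mul_sum]
  rw [hc (fun p k => Real.cos (θ p k)), hc (fun p k => Real.sin (θ p k))]
  rw [← Finset.sum_add_distrib, Finset.mul_sum]
  refine Finset.sum_congr rfl fun p _ => ?_
  rw [← Finset.sum_add_distrib, Finset.mul_sum]
  refine Finset.sum_congr rfl fun q _ => ?_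
  rw [← Finset.sum_add_distrib, Finset.mul_sum]
  refine Finset.sum_congr rfl fun k _ => ?_
  rw [← Finset.sum_add_distrib, Finset.mul_sum]
  refine Finset.sum_congr rfl fun l _ => ?_
  rw [Real.cos_sub]
  ring

lemma cross_term_zero {Ωs : Type*} [MeasurableSpace Ωs] (μ : Measure Ωs)
    [IsProbabilityMeasure μ] (W : Ωs → ℝ) (Z : Ωs → ℝ × ℝ × ℝ)
    (hWm : Measurable W) (hZm : Measurable Z) (hind : IndepFun Z W μ)
    (hWdist : μ.map W = uniformNegPiPi) (c₁ c₂ : ℝ) :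
    ∫ x, Real.cos (c₁ + W x + (Z x).2.1 - (c₂ + (Z x).1 + (Z x).2.2)) ∂μ = 0 := by
  have hmap : μ.map (fun x => (Z x, W x)) = (μ.map Z).prod (μ.map W) :=
    (indepFun_iff_map_prod_eq_prod_map_map hZm.aemeasurable hWm.aemeasurable).mp hind
  have hFm : Measurable (fun u : (ℝ × ℝ × ℝ) × ℝ =>
      Real.cos (c₁ + u.2 + u.1.2.1 - (c₂ + u.1.1 + u.1.2.2))) := by fun_prop
  haveI : IsProbabilityMeasure (μ.map Z) := Measure.isProbabilityMeasure_map hZm.aemeasurable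
  haveI : IsProbabilityMeasure (μ.map W) := Measure.isProbabilityMeasure_map hWm.aemeasurable
  have hstep : ∫ x, Real.cos (c₁ + W x + (Z x).2.1 - (c₂ + (Z x).1 + (Z x).2.2)) ∂μ
      = ∫ u : (ℝ × ℝ × ℝ) × ℝ, Real.cos (c₁ + u.2 + u.1.2.1 - (c₂ + u.1.1 + u.1.2.2))
          ∂((μ.map Z).prod (μ.map W)) := by
    rw [← hmap, integral_map (hZm.prodMk hWm).aemeasurable hFm.aestronglyMeasurable]
  rw [hstep, integral_prod]
  · have hin : ∀ z : ℝ × ℝ × ℝ,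
        ∫ w, Real.cos (c₁ + w + z.2.1 - (c₂ + z.1 + z.2.2)) ∂(μ.map W) = 0 := by
      intro z
      rw [hWdist]
      have : (fun w => Real.cos (c₁ + w + z.2.1 - (c₂ + z.1 + z.2.2)))
          = fun w => Real.cos ((c₁ + z.2.1 - (c₂ + z.1 + z.2.2)) + w) := by
        funext w; congr 1; ring
      rw [this, integral_cos_add_uniform]
    simp only [hin, integral_zero]
  · exact Integrable.mono' (integrable_const 1) hFm.aestronglyMeasurable
      (Filter.Eventually.of_forall fun u => by
        simpa [Real.norm_eq_abs] using Real.abs_cos_le_one _)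

lemma gauss_pair_term {Ωs : Type*} [MeasurableSpace Ωs] (μ : Measure Ωs)
    [IsProbabilityMeasure μ] (X Y : Ωs → ℝ) (hXm : Measurable X) (hYm : Measurable Y)
    (v : ℝ≥0) (hind : IndepFun X Y μ) (hX : μ.map X = gaussianReal 0 v)
    (hY : μ.map Y = gaussianReal 0 v) (c : ℝ) :
    ∫ x, Real.cos (c + (X x - Y x)) ∂μ = Real.exp (-(v:ℝ)) * Real.cos c := by
  have hmap : μ.map (fun x => (X x, Y x)) = (μ.map X).prod (μ.map Y) :=
    (indepFun_iff_map_prod_eq_prod_map_map hXm.aemeasurable hYm.aemeasurable).mp hind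
  have hFm : Measurable (fun u : ℝ × ℝ => Real.cos (c + (u.1 - u.2))) := by fun_prop
  have hstep : ∫ x, Real.cos (c + (X x - Y x)) ∂μ
      = ∫ u : ℝ × ℝ, Real.cos (c + (u.1 - u.2))
          ∂((gaussianReal 0 v).prod (gaussianReal 0 v)) := by
    rw [show (gaussianReal 0 v).prod (gaussianReal 0 v) = μ.map (fun x => (X x, Y x)) by
        rw [hmap, hX, hY],
      integral_map (hXm.prodMk hYm).aemeasurable hFm.aestronglyMeasurable]
  rw [hstep, integral_prod]
  · have hin : ∀ s : ℝ, ∫ t, Real.cos (c + (s - t)) ∂(gaussianReal 0 v)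
        = Real.cos (c + s) * Real.exp (-(v:ℝ)/2) := by
      intro s
      have : (fun t => Real.cos (c + (s - t))) = fun t => Real.cos (-(c + s) + t) := by
        funext t
        rw [← Real.cos_neg]
        congr 1
        ring
      rw [this, integral_cos_add_gaussian, Real.cos_neg]
    simp only [hin]
    rw [integral_mul_const, integral_cos_add_gaussian, mul_assoc, ← Real.exp_add]
    rw [show -(v:ℝ) / 2 + -(v:ℝ) / 2 = -(v:ℝ) by ring, mul_comm]
  · exact Integrable.mono' (integrable_const 1) hFm.aestronglyMeasurable
      (Filter.Eventually.of_forall fun u => by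
        simpa [Real.norm_eq_abs] using Real.abs_cos_le_one _)

set_option maxHeartbeats 2000000 in
/-- Theorem 1 of the paper: with nonnegative integrable random channel gains
`α_p`, i.i.d. per-path phases `ω_p` uniform on `[-π, π]`, i.i.d. per-antenna Gaussian phase
errors `ε_k ~ N(0, σ²)`, and the three families `(α_p)`, `(ω_p)`, `(ε_k)` mutually
independent (encoded as independence of the three σ-algebras generated by the families),
the expected RSRP
`E[ρ ((Σ_p √α_p g_p Σ_k cos(ψ_{p,k} + ω_p + ε_k))² + (Σ_p √α_p g_p Σ_k sin(ψ_{p,k} + ω_p + ε_k))²)]`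
equals `Σ_p A_p E[α_p]`, where
`A_p = ρ g_p² (n (1 − e^{−σ²}) + e^{−σ²} Σ_k Σ_l cos(ψ_{p,k} − ψ_{p,l}))` and `n = |K|`. -/
theorem expected_rsrp_eq_sum_coeff_mul_expected_gain {Ωs : Type*} [MeasurableSpace Ωs]
    (μ : Measure Ωs) [IsProbabilityMeasure μ]
    {P K : Type*} [Fintype P] [Nonempty P] [Fintype K] [Nonempty K]
    (ρ σ : ℝ) (hρ : 0 ≤ ρ) (hσ : 0 ≤ σ) (g : P → ℝ) (ψ : P × K → ℝ)
    (α : P → Ωs → ℝ) (ω : P → Ωs → ℝ) (ε : K → Ωs → ℝ)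
    (hαm : ∀ p, Measurable (α p)) (hα0 : ∀ p x, 0 ≤ α p x)
    (hαint : ∀ p, Integrable (α p) μ)
    (hωm : ∀ p, Measurable (ω p)) (hεm : ∀ k, Measurable (ε k))
    (hωind : iIndepFun ω μ)
    (hωdist : ∀ p, μ.map (ω p) = uniformNegPiPi)
    (hεind : iIndepFun ε μ)
    (hεdist : ∀ k, μ.map (ε k) = gaussianReal 0 (σ ^ 2).toNNReal)
    (hfam : iIndep
      ![⨆ p, MeasurableSpace.comap (α p) inferInstance,
        ⨆ p, MeasurableSpace.comap (ω p) inferInstance,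
        ⨆ k, MeasurableSpace.comap (ε k) inferInstance] μ) :
    ∫ x, ρ *
        ((∑ p, Real.sqrt (α p x) * g p * ∑ k, Real.cos (ψ (p, k) + ω p x + ε k x)) ^ 2 +
          (∑ p, Real.sqrt (α p x) * g p * ∑ k, Real.sin (ψ (p, k) + ω p x + ε k x)) ^ 2) ∂μ =
      ∑ p, (ρ * g p ^ 2 *
          ((Fintype.card K : ℝ) * (1 - Real.exp (-σ ^ 2)) +
            Real.exp (-σ ^ 2) * ∑ k, ∑ l, Real.cos (ψ (p, k) - ψ (p, l)))) *
        ∫ x, α p x ∂μ := by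
  classical
  have hπv : (((σ^2).toNNReal : ℝ≥0) : ℝ) = σ^2 := Real.coe_toNNReal _ (sq_nonneg σ)
  -- basic σ-algebra bounds
  have hAle : (⨆ p, MeasurableSpace.comap (α p) inferInstance) ≤ (inferInstance : MeasurableSpace Ωs) := iSup_le fun p => (hαm p).comap_le
  have hWle : (⨆ p, MeasurableSpace.comap (ω p) inferInstance) ≤ (inferInstance : MeasurableSpace Ωs) := iSup_le fun p => (hωm p).comap_le
  have hEle : (⨆ k, MeasurableSpace.comap (ε k) inferInstance) ≤ (inferInstance : MeasurableSpace Ωs) := iSup_le fun k => (hεm k).comap_le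
  have h_le : ∀ i : Fin 3, (![(⨆ p, MeasurableSpace.comap (α p) inferInstance), (⨆ p, MeasurableSpace.comap (ω p) inferInstance), (⨆ k, MeasurableSpace.comap (ε k) inferInstance)] : Fin 3 → MeasurableSpace Ωs) i ≤
      (inferInstance : MeasurableSpace Ωs) := by
    intro i
    fin_cases i <;> assumption
  -- independence of the α σ-algebra from the (ω, ε) σ-algebra
  have hαωε : Indep (⨆ p, MeasurableSpace.comap (α p) inferInstance) ((⨆ p, MeasurableSpace.comap (ω p) inferInstance) ⊔ (⨆ k, MeasurableSpace.comap (ε k) inferInstance)) μ := by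
    have hdisj : Disjoint ({0} : Set (Fin 3)) {1, 2} := by simp
    have h := indep_iSup_of_disjoint h_le hfam hdisj
    have e0 : (⨆ i ∈ ({0} : Set (Fin 3)), (![(⨆ p, MeasurableSpace.comap (α p) inferInstance), (⨆ p, MeasurableSpace.comap (ω p) inferInstance), (⨆ k, MeasurableSpace.comap (ε k) inferInstance)] : Fin 3 → MeasurableSpace Ωs) i) = (⨆ p, MeasurableSpace.comap (α p) inferInstance) := by
      simp
    have e12 : (⨆ i ∈ ({1, 2} : Set (Fin 3)), (![(⨆ p, MeasurableSpace.comap (α p) inferInstance), (⨆ p, MeasurableSpace.comap (ω p) inferInstance), (⨆ k, MeasurableSpace.comap (ε k) inferInstance)] : Fin 3 → MeasurableSpace Ωs) i)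
        = (⨆ p, MeasurableSpace.comap (ω p) inferInstance) ⊔ (⨆ k, MeasurableSpace.comap (ε k) inferInstance) := by
      rw [show ({1, 2} : Set (Fin 3)) = insert 1 {2} from rfl, iSup_insert, iSup_singleton]
      simp
    rwa [e0, e12] at h
  have hWE : Indep (⨆ p, MeasurableSpace.comap (ω p) inferInstance) (⨆ k, MeasurableSpace.comap (ε k) inferInstance) μ := by
    have h := hfam.indep (i := 1) (j := 2) (by decide)
    simpa using h
  -- merged independence of the family (ω_p)_p ∪ (ε_k)_k
  have hmS_le : ∀ i, (Sum.elim (fun p => MeasurableSpace.comap (ω p) inferInstance)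
      (fun k => MeasurableSpace.comap (ε k) inferInstance) : P ⊕ K → MeasurableSpace Ωs) i ≤ (inferInstance : MeasurableSpace Ωs) := by
    rintro (p | k)
    · exact (hωm p).comap_le
    · exact (hεm k).comap_le
  have hmerge : iIndep (Sum.elim (fun p => MeasurableSpace.comap (ω p) inferInstance)
      (fun k => MeasurableSpace.comap (ε k) inferInstance) : P ⊕ K → MeasurableSpace Ωs) μ := by
    rw [iIndep_iff]
    intro s f hf
    have hI : ⋂ i ∈ s, f i
        = (⋂ p ∈ s.toLeft, f (Sum.inl p)) ∩ (⋂ k ∈ s.toRight, f (Sum.inr k)) := by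
      ext x
      simp only [Set.mem_iInter, Set.mem_inter_iff, Finset.mem_toLeft, Finset.mem_toRight]
      constructor
      · exact fun h => ⟨fun p hp => h _ hp, fun k hk => h _ hk⟩
      · rintro ⟨h1, h2⟩ (p | k) hi
        exacts [h1 p hi, h2 k hi]
    have hA : MeasurableSet[(⨆ p, MeasurableSpace.comap (ω p) inferInstance)] (⋂ p ∈ s.toLeft, f (Sum.inl p)) :=
      MeasurableSet.biInter (Finset.countable_toSet _)
        (fun p hp => le_iSup (fun p => MeasurableSpace.comap (ω p) inferInstance) p _
          (hf _ (Finset.mem_toLeft.mp hp)))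
    have hB : MeasurableSet[(⨆ k, MeasurableSpace.comap (ε k) inferInstance)] (⋂ k ∈ s.toRight, f (Sum.inr k)) :=
      MeasurableSet.biInter (Finset.countable_toSet _)
        (fun k hk => le_iSup (fun k => MeasurableSpace.comap (ε k) inferInstance) k _
          (hf _ (Finset.mem_toRight.mp hk)))
    have hPA : μ (⋂ p ∈ s.toLeft, f (Sum.inl p)) = ∏ p ∈ s.toLeft, μ (f (Sum.inl p)) :=
      hωind.meas_biInter (fun p hp => hf _ (Finset.mem_toLeft.mp hp))
    have hPB : μ (⋂ k ∈ s.toRight, f (Sum.inr k)) = ∏ k ∈ s.toRight, μ (f (Sum.inr k)) :=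
      hεind.meas_biInter (fun k hk => hf _ (Finset.mem_toRight.mp hk))
    calc μ (⋂ i ∈ s, f i)
        = μ ((⋂ p ∈ s.toLeft, f (Sum.inl p)) ∩ (⋂ k ∈ s.toRight, f (Sum.inr k))) := by rw [hI]
      _ = μ (⋂ p ∈ s.toLeft, f (Sum.inl p)) * μ (⋂ k ∈ s.toRight, f (Sum.inr k)) :=
          (Indep_iff _ _ _).mp hWE _ _ hA hB
      _ = (∏ p ∈ s.toLeft, μ (f (Sum.inl p))) * ∏ k ∈ s.toRight, μ (f (Sum.inr k)) := by
          rw [hPA, hPB]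
      _ = ∏ i ∈ s, μ (f i) := by
          conv_rhs => rw [← Finset.toLeft_disjSum_toRight (u := s)]
          rw [Finset.prod_disjSum]
  -- independence of ω_p from the triple (ω_q, ε_k, ε_l) for q ≠ p
  have homega : ∀ (p q : P) (k l : K), q ≠ p →
      IndepFun (fun x => (ω q x, ε k x, ε l x)) (ω p) μ := by
    intro p q k l hqp
    rw [IndepFun_iff_Indep]
    have h := indep_iSup_of_disjoint hmS_le hmerge (S := ({Sum.inl p}ᶜ : Set (P ⊕ K)))
      (T := {Sum.inl p}) disjoint_compl_left
    have e1 : (⨆ i ∈ ({Sum.inl p} : Set (P ⊕ K)), (Sum.elim (fun p => MeasurableSpace.comap (ω p) inferInstance)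
      (fun k => MeasurableSpace.comap (ε k) inferInstance) : P ⊕ K → MeasurableSpace Ωs) i) = (Sum.elim (fun p => MeasurableSpace.comap (ω p) inferInstance)
      (fun k => MeasurableSpace.comap (ε k) inferInstance) : P ⊕ K → MeasurableSpace Ωs) (Sum.inl p) := by simp
    refine indep_of_indep_of_le_left (indep_of_indep_of_le_right h ?_) ?_
    · rw [e1]
      exact le_rfl
    · refine Measurable.comap_le ?_
      have hq : (Sum.elim (fun p => MeasurableSpace.comap (ω p) inferInstance)
      (fun k => MeasurableSpace.comap (ε k) inferInstance) : P ⊕ K → MeasurableSpace Ωs) (Sum.inl q) ≤ ⨆ i ∈ ({Sum.inl p}ᶜ : Set (P ⊕ K)), (Sum.elim (fun p => MeasurableSpace.comap (ω p) inferInstance)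
      (fun k => MeasurableSpace.comap (ε k) inferInstance) : P ⊕ K → MeasurableSpace Ωs) i :=
        le_biSup (Sum.elim (fun p => MeasurableSpace.comap (ω p) inferInstance)
      (fun k => MeasurableSpace.comap (ε k) inferInstance) : P ⊕ K → MeasurableSpace Ωs) (by simp [hqp])
      have hk : (Sum.elim (fun p => MeasurableSpace.comap (ω p) inferInstance)
      (fun k => MeasurableSpace.comap (ε k) inferInstance) : P ⊕ K → MeasurableSpace Ωs) (Sum.inr k) ≤ ⨆ i ∈ ({Sum.inl p}ᶜ : Set (P ⊕ K)), (Sum.elim (fun p => MeasurableSpace.comap (ω p) inferInstance)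
      (fun k => MeasurableSpace.comap (ε k) inferInstance) : P ⊕ K → MeasurableSpace Ωs) i :=
        le_biSup (Sum.elim (fun p => MeasurableSpace.comap (ω p) inferInstance)
      (fun k => MeasurableSpace.comap (ε k) inferInstance) : P ⊕ K → MeasurableSpace Ωs) (by simp)
      have hl : (Sum.elim (fun p => MeasurableSpace.comap (ω p) inferInstance)
      (fun k => MeasurableSpace.comap (ε k) inferInstance) : P ⊕ K → MeasurableSpace Ωs) (Sum.inr l) ≤ ⨆ i ∈ ({Sum.inl p}ᶜ : Set (P ⊕ K)), (Sum.elim (fun p => MeasurableSpace.comap (ω p) inferInstance)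
      (fun k => MeasurableSpace.comap (ε k) inferInstance) : P ⊕ K → MeasurableSpace Ωs) i :=
        le_biSup (Sum.elim (fun p => MeasurableSpace.comap (ω p) inferInstance)
      (fun k => MeasurableSpace.comap (ε k) inferInstance) : P ⊕ K → MeasurableSpace Ωs) (by simp)
      exact Measurable.prodMk (Measurable.of_comap_le hq)
        (Measurable.prodMk (Measurable.of_comap_le hk) (Measurable.of_comap_le hl))
  -- independence used for factorization
  have hindepfun : ∀ (p q : P) (k l : K),
      IndepFun (fun x => Real.sqrt (α p x) * Real.sqrt (α q x))
        (fun x => Real.cos (ψ (p, k) + ω p x + ε k x - (ψ (q, l) + ω q x + ε l x))) μ := by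
    intro p q k l
    rw [IndepFun_iff_Indep]
    refine indep_of_indep_of_le_left (indep_of_indep_of_le_right hαωε ?_) ?_
    · refine Measurable.comap_le ?_
      have hω' : ∀ r, Measurable[(⨆ p, MeasurableSpace.comap (ω p) inferInstance) ⊔ (⨆ k, MeasurableSpace.comap (ε k) inferInstance)] (ω r) := fun r => Measurable.of_comap_le
        ((le_iSup (fun r => MeasurableSpace.comap (ω r) inferInstance) r).trans le_sup_left)
      have hε' : ∀ j, Measurable[(⨆ p, MeasurableSpace.comap (ω p) inferInstance) ⊔ (⨆ k, MeasurableSpace.comap (ε k) inferInstance)] (ε j) := fun j => Measurable.of_comap_le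
        ((le_iSup (fun j => MeasurableSpace.comap (ε j) inferInstance) j).trans le_sup_right)
      exact Real.measurable_cos.comp
        (((measurable_const.add (hω' p)).add (hε' k)).sub
          ((measurable_const.add (hω' q)).add (hε' l)))
    · refine Measurable.comap_le ?_
      have hα' : ∀ r, Measurable[(⨆ p, MeasurableSpace.comap (α p) inferInstance)] (α r) := fun r => Measurable.of_comap_le (le_iSup (fun r => MeasurableSpace.comap (α r) inferInstance) r)
      exact (Real.continuous_sqrt.measurable.comp (hα' p)).mul
        (Real.continuous_sqrt.measurable.comp (hα' q))
  -- measurability and integrability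
  have hsqm : ∀ p q : P, Measurable fun x => Real.sqrt (α p x) * Real.sqrt (α q x) :=
    fun p q => (Real.continuous_sqrt.measurable.comp (hαm p)).mul
      (Real.continuous_sqrt.measurable.comp (hαm q))
  have hθm : ∀ (p q : P) (k l : K),
      Measurable fun x => Real.cos (ψ (p, k) + ω p x + ε k x - (ψ (q, l) + ω q x + ε l x)) :=
    fun p q k l => Real.measurable_cos.comp
      (((measurable_const.add (hωm p)).add (hεm k)).sub
        ((measurable_const.add (hωm q)).add (hεm l)))
  have hsqb : ∀ (p q : P) x, |Real.sqrt (α p x) * Real.sqrt (α q x)| ≤ (α p x + α q x) / 2 := by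
    intro p q x
    rw [abs_of_nonneg (mul_nonneg (Real.sqrt_nonneg _) (Real.sqrt_nonneg _))]
    nlinarith [sq_nonneg (Real.sqrt (α p x) - Real.sqrt (α q x)),
      Real.sq_sqrt (hα0 p x), Real.sq_sqrt (hα0 q x)]
  have hTint : ∀ (p q : P) (k l : K),
      Integrable (fun x => (Real.sqrt (α p x) * Real.sqrt (α q x)) *
        Real.cos (ψ (p, k) + ω p x + ε k x - (ψ (q, l) + ω q x + ε l x))) μ := by
    intro p q k l
    refine Integrable.mono' (((hαint p).add (hαint q)).div_const 2)
      ((hsqm p q).mul (hθm p q k l)).aestronglyMeasurable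
      (Filter.Eventually.of_forall fun x => ?_)
    rw [Real.norm_eq_abs, abs_mul]
    calc |Real.sqrt (α p x) * Real.sqrt (α q x)| * |Real.cos _|
        ≤ |Real.sqrt (α p x) * Real.sqrt (α q x)| * 1 := by
          gcongr; exact Real.abs_cos_le_one _
      _ = |Real.sqrt (α p x) * Real.sqrt (α q x)| := mul_one _
      _ ≤ (α p x + α q x) / 2 := hsqb p q x
  -- the diagonal α integral
  have hdiag_sq : ∀ p : P, ∫ x, Real.sqrt (α p x) * Real.sqrt (α p x) ∂μ = ∫ x, α p x ∂μ :=
    fun p => integral_congr_ae (Filter.Eventually.of_forall fun x =>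
      Real.mul_self_sqrt (hα0 p x))
  -- cross-path terms vanish
  have hJ0 : ∀ (p q : P) (k l : K), q ≠ p →
      ∫ x, Real.cos (ψ (p, k) + ω p x + ε k x - (ψ (q, l) + ω q x + ε l x)) ∂μ = 0 := by
    intro p q k l hqp
    exact cross_term_zero μ (ω p) (fun x => (ω q x, ε k x, ε l x)) (hωm p)
      ((hωm q).prodMk ((hεm k).prodMk (hεm l))) (homega p q k l hqp) (hωdist p)
      (ψ (p, k)) (ψ (q, l))
  -- same-path distinct-antenna terms
  have hJ1 : ∀ (p : P) (k l : K), k ≠ l →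
      ∫ x, Real.cos (ψ (p, k) + ω p x + ε k x - (ψ (p, l) + ω p x + ε l x)) ∂μ
        = Real.exp (-σ ^ 2) * Real.cos (ψ (p, k) - ψ (p, l)) := by
    intro p k l hkl
    have hre : (fun x => Real.cos (ψ (p, k) + ω p x + ε k x - (ψ (p, l) + ω p x + ε l x)))
        = fun x => Real.cos ((ψ (p, k) - ψ (p, l)) + (ε k x - ε l x)) := by
      funext x; congr 1; ring
    rw [hre, gauss_pair_term μ (ε k) (ε l) (hεm k) (hεm l) ((σ ^ 2).toNNReal)
      (hεind.indepFun hkl) (hεdist k) (hεdist l) (ψ (p, k) - ψ (p, l)), hπv]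
  -- diagonal terms
  have hJd : ∀ (p : P) (k : K),
      ∫ x, Real.cos (ψ (p, k) + ω p x + ε k x - (ψ (p, k) + ω p x + ε k x)) ∂μ = 1 := by
    intro p k
    have : (fun x => Real.cos (ψ (p, k) + ω p x + ε k x - (ψ (p, k) + ω p x + ε k x)))
        = fun _ => (1 : ℝ) := by
      funext x
      rw [sub_self, Real.cos_zero]
    rw [this, integral_const]
    simp
  -- main computation
  calc ∫ x, ρ *
        ((∑ p, Real.sqrt (α p x) * g p * ∑ k, Real.cos (ψ (p, k) + ω p x + ε k x)) ^ 2 +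
          (∑ p, Real.sqrt (α p x) * g p * ∑ k, Real.sin (ψ (p, k) + ω p x + ε k x)) ^ 2) ∂μ
      = ∫ x, ∑ p, ∑ q, ∑ k, ∑ l, ρ * (g p * g q) * ((Real.sqrt (α p x) * Real.sqrt (α q x)) *
          Real.cos ((ψ (p, k) + ω p x + ε k x) - (ψ (q, l) + ω q x + ε l x))) ∂μ := by
        refine integral_congr_ae (Filter.Eventually.of_forall fun x => ?_)
        exact rsrp_expand ρ (fun p => Real.sqrt (α p x)) g
          (fun p k => ψ (p, k) + ω p x + ε k x)
    _ = ∑ p, ∑ q, ∑ k, ∑ l, ∫ x, ρ * (g p * g q) * ((Real.sqrt (α p x) * Real.sqrt (α q x)) *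
          Real.cos ((ψ (p, k) + ω p x + ε k x) - (ψ (q, l) + ω q x + ε l x))) ∂μ := by
        rw [integral_finset_sum _ (fun p _ => integrable_finset_sum _ (fun q _ =>
          integrable_finset_sum _ (fun k _ => integrable_finset_sum _ (fun l _ =>
            ((hTint p q k l).const_mul _)))))]
        refine Finset.sum_congr rfl fun p _ => ?_
        rw [integral_finset_sum _ (fun q _ => integrable_finset_sum _ (fun k _ =>
          integrable_finset_sum _ (fun l _ => ((hTint p q k l).const_mul _))))]
        refine Finset.sum_congr rfl fun q _ => ?_
        rw [integral_finset_sum _ (fun k _ => integrable_finset_sum _ (fun l _ =>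
          ((hTint p q k l).const_mul _)))]
        refine Finset.sum_congr rfl fun k _ => ?_
        rw [integral_finset_sum _ (fun l _ => ((hTint p q k l).const_mul _))]
    _ = ∑ p, ∑ q, ∑ k, ∑ l, ρ * (g p * g q) *
          ((∫ x, Real.sqrt (α p x) * Real.sqrt (α q x) ∂μ) *
            (∫ x, Real.cos (ψ (p, k) + ω p x + ε k x - (ψ (q, l) + ω q x + ε l x)) ∂μ)) := by
        refine Finset.sum_congr rfl fun p _ => Finset.sum_congr rfl fun q _ =>
          Finset.sum_congr rfl fun k _ => Finset.sum_congr rfl fun l _ => ?_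
        rw [integral_const_mul]
        congr 1
        exact IndepFun.integral_fun_mul_eq_mul_integral (hindepfun p q k l) (hsqm p q).aestronglyMeasurable
          (hθm p q k l).aestronglyMeasurable
    _ = ∑ p, (ρ * g p ^ 2 *
          ((Fintype.card K : ℝ) * (1 - Real.exp (-σ ^ 2)) +
            Real.exp (-σ ^ 2) * ∑ k, ∑ l, Real.cos (ψ (p, k) - ψ (p, l)))) *
        ∫ x, α p x ∂μ := by
        refine Finset.sum_congr rfl fun p _ => ?_
        rw [Finset.sum_eq_single_of_mem p (Finset.mem_univ p) (fun q _ hq => ?_)]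
        · calc ∑ k, ∑ l, ρ * (g p * g p) *
                ((∫ x, Real.sqrt (α p x) * Real.sqrt (α p x) ∂μ) *
                  (∫ x, Real.cos (ψ (p, k) + ω p x + ε k x - (ψ (p, l) + ω p x + ε l x)) ∂μ))
              = ∑ k, ∑ l, (ρ * (g p * g p) * ∫ x, α p x ∂μ) *
                  (if k = l then 1 else Real.exp (-σ ^ 2) * Real.cos (ψ (p, k) - ψ (p, l))) := by
                refine Finset.sum_congr rfl fun k _ => Finset.sum_congr rfl fun l _ => ?_
                rw [hdiag_sq p]
                by_cases hkl : k = l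
                · subst hkl
                  rw [hJd p k, if_pos rfl]
                  ring
                · rw [hJ1 p k l hkl, if_neg hkl]
                  ring
            _ = (ρ * (g p * g p) * ∫ x, α p x ∂μ) *
                  ∑ k, ∑ l, (if k = l then 1 else
                    Real.exp (-σ ^ 2) * Real.cos (ψ (p, k) - ψ (p, l))) := by
                simp_rw [← Finset.mul_sum]
            _ = (ρ * g p ^ 2 *
                  ((Fintype.card K : ℝ) * (1 - Real.exp (-σ ^ 2)) +
                    Real.exp (-σ ^ 2) * ∑ k, ∑ l, Real.cos (ψ (p, k) - ψ (p, l)))) *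
                ∫ x, α p x ∂μ := by
                rw [sum_ite_helper (Real.exp (-σ ^ 2))
                  (fun k l => Real.cos (ψ (p, k) - ψ (p, l))) (fun k => by simp)]
                ring
        · refine Finset.sum_eq_zero fun k _ => Finset.sum_eq_zero fun l _ => ?_
          rw [hJ0 p q k l hq]
          ring
end

section
/- Let P and K be finite nonempty index sets with |K| = n, let ρ ≥ 0, σ ≥ 0, let a : P → ℝ with a_p ≥ 0 for all p (deterministic channel gains), let g : P → ℝ and ψ : P × K → ℝ be given. On a probability space let (ω_p)_{p∈P} be i.i.d. with the uniform distribution on [-π, π] and let (ε_k)_{k∈K} be i.i.d. with distribution N(0, σ²), the two families being independent of each other. Then E[ ρ·((Σ_{p∈P} √(a_p)·g_p·Σ_{k∈K} cos(ψ_{p,k} + ω_p + ε_k))² + (Σ_{p∈P} √(a_p)·g_p·Σ_{k∈K} sin(ψ_{p,k} + ω_p + ε_k))²) ] = Σ_{p∈P} ρ·g_p²·( n·(1 − e^{−σ²}) + e^{−σ²}·Σ_{k∈K} Σ_{l∈K} cos(ψ_{p,k} − ψ_{p,l}) )·a_p. -/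
open MeasureTheory ProbabilityTheory Real

lemma rsrpAux_uniform_cos : ∫ x, Real.cos x ∂uniformNegPiPi = 0 := by
  rw [uniformNegPiPi, integral_smul_measure, integral_Icc_eq_integral_Ioc,
    ← intervalIntegral.integral_of_le (by linarith [Real.pi_pos]), integral_cos]
  simp

lemma rsrpAux_uniform_sin : ∫ x, Real.sin x ∂uniformNegPiPi = 0 := by
  rw [uniformNegPiPi, integral_smul_measure, integral_Icc_eq_integral_Ioc,
    ← intervalIntegral.integral_of_le (by linarith [Real.pi_pos]), integral_sin]
  simp

lemma rsrpAux_exp_quad (b : ℝ) (hb : 0 < b) :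
    (∫ x : ℝ, Real.exp (-b * x ^ 2) * Real.cos x) = Real.sqrt (π / b) * Real.exp (-(1 / (4 * b)))
    ∧ (∫ x : ℝ, Real.exp (-b * x ^ 2) * Real.sin x) = 0 := by
  have hb' : (0:ℝ) < ((b:ℂ)).re := by simpa using hb
  have key := fourierIntegral_gaussian (b := (b:ℂ)) hb' 1
  have hint : Integrable (fun x : ℝ => Complex.exp (-(b:ℂ) * x ^ 2 + Complex.I * x + 0)) :=
    integrable_cexp_quadratic hb' Complex.I 0
  have hfeq : (fun x : ℝ => Complex.exp (Complex.I * 1 * x) * Complex.exp (-(b:ℂ) * x ^ 2))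
      = fun x : ℝ => Complex.exp (-(b:ℂ) * x ^ 2 + Complex.I * x + 0) := by
    funext x
    rw [← Complex.exp_add]
    congr 1
    ring
  rw [hfeq] at key
  have hre : ∀ x : ℝ, (Complex.exp (-(b:ℂ) * x ^ 2 + Complex.I * x + 0)).re
      = Real.exp (-b * x ^ 2) * Real.cos x := by
    intro x
    rw [Complex.exp_re]
    norm_num [Complex.add_re, Complex.mul_re, Complex.add_im, Complex.mul_im,
      ← Complex.ofReal_pow]
  have him : ∀ x : ℝ, (Complex.exp (-(b:ℂ) * x ^ 2 + Complex.I * x + 0)).im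
      = Real.exp (-b * x ^ 2) * Real.sin x := by
    intro x
    rw [Complex.exp_im]
    norm_num [Complex.add_re, Complex.mul_re, Complex.add_im, Complex.mul_im,
      ← Complex.ofReal_pow]
  have hrhs : ((π / (b:ℂ)) ^ (1 / 2 : ℂ) * Complex.exp (-(1:ℂ) ^ 2 / (4 * (b:ℂ))))
      = ((Real.sqrt (π / b) * Real.exp (-(1 / (4 * b))) : ℝ) : ℂ) := by
    have h1 : (π / (b:ℂ)) = (((π / b : ℝ)) : ℂ) := by push_cast; ring
    have h2 : (-(1:ℂ) ^ 2 / (4 * (b:ℂ))) = ((-(1 / (4 * b)) : ℝ) : ℂ) := by push_cast; ring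
    have h3 : ((1:ℂ) / 2) = (((1:ℝ)/2 : ℝ) : ℂ) := by norm_num
    rw [h1, h2, h3, ← Complex.ofReal_cpow (by positivity), ← Complex.ofReal_exp,
      ← Complex.ofReal_mul, Real.sqrt_eq_rpow]
  have hrc : Complex.re = RCLike.re := rfl
  have hic : Complex.im = RCLike.im := rfl
  constructor
  · calc ∫ x : ℝ, Real.exp (-b * x ^ 2) * Real.cos x
        = ∫ x : ℝ, (Complex.exp (-(b:ℂ) * x ^ 2 + Complex.I * x + 0)).re := by
          simp_rw [hre]
      _ = (∫ x : ℝ, Complex.exp (-(b:ℂ) * x ^ 2 + Complex.I * x + 0)).re := by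
          rw [hrc]; exact integral_re hint
      _ = _ := by rw [key, hrhs, Complex.ofReal_re]
  · calc ∫ x : ℝ, Real.exp (-b * x ^ 2) * Real.sin x
        = ∫ x : ℝ, (Complex.exp (-(b:ℂ) * x ^ 2 + Complex.I * x + 0)).im := by
          simp_rw [him]
      _ = (∫ x : ℝ, Complex.exp (-(b:ℂ) * x ^ 2 + Complex.I * x + 0)).im := by
          rw [hic]; exact integral_im hint
      _ = 0 := by rw [key, hrhs, Complex.ofReal_im]

open scoped NNReal ENNReal in
lemma rsrpAux_gauss_integral (v : ℝ≥0) (f : ℝ → ℝ) (hf : Measurable f) :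
    ∫ x, f x ∂(gaussianReal 0 v) = if v = 0 then f 0 else
      (Real.sqrt (2 * π * v))⁻¹ * ∫ x, Real.exp (-(2 * (v:ℝ))⁻¹ * x ^ 2) * f x := by
  rcases eq_or_ne v 0 with hv | hv
  · simp [hv, gaussianReal, integral_dirac' _ _ hf.stronglyMeasurable]
  · rw [if_neg hv, gaussianReal_of_var_ne_zero _ hv]
    have hpdf : gaussianPDF 0 v
        = fun x => ((Real.toNNReal (gaussianPDFReal 0 v x) : ℝ≥0) : ℝ≥0∞) := rfl
    rw [hpdf, integral_withDensity_eq_integral_smul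
      ((measurable_gaussianPDFReal 0 v).real_toNNReal) f]
    have : ∀ x : ℝ, (Real.toNNReal (gaussianPDFReal 0 v x)) • f x
        = (Real.sqrt (2 * π * v))⁻¹ * (Real.exp (-(2 * (v:ℝ))⁻¹ * x ^ 2) * f x) := by
      intro x
      rw [NNReal.smul_def, smul_eq_mul, Real.coe_toNNReal _ (gaussianPDFReal_nonneg 0 v x),
        gaussianPDFReal]
      have : -(x - 0) ^ 2 / (2 * (v:ℝ)) = -(2 * (v:ℝ))⁻¹ * x ^ 2 := by ring
      rw [this]; ring
    simp_rw [this]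
    rw [integral_const_mul]

open scoped NNReal in
lemma rsrpAux_gauss_cos (v : ℝ≥0) :
    ∫ x, Real.cos x ∂(gaussianReal 0 v) = Real.exp (-(v:ℝ)/2) := by
  rw [rsrpAux_gauss_integral v _ Real.measurable_cos]
  rcases eq_or_ne v 0 with hv | hv
  · simp [hv]
  · have hvpos : (0:ℝ) < (v:ℝ) := by positivity
    rw [if_neg hv, (rsrpAux_exp_quad ((2*(v:ℝ))⁻¹) (by positivity)).1]
    have h1 : π / (2*(v:ℝ))⁻¹ = 2 * π * v := by field_simp
    have h2 : (1 / (4 * (2*(v:ℝ))⁻¹)) = (v:ℝ)/2 := by field_simp; ring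
    rw [h1, h2, ← mul_assoc, inv_mul_cancel₀ (by positivity), one_mul, neg_div]

open scoped NNReal in
lemma rsrpAux_gauss_sin (v : ℝ≥0) : ∫ x, Real.sin x ∂(gaussianReal 0 v) = 0 := by
  rw [rsrpAux_gauss_integral v _ Real.measurable_sin]
  rcases eq_or_ne v 0 with hv | hv
  · simp [hv]
  · have hvpos : (0:ℝ) < (v:ℝ) := by positivity
    rw [if_neg hv, (rsrpAux_exp_quad ((2*(v:ℝ))⁻¹) (by positivity)).2, mul_zero]

section Aux

variable {Ω : Type*} [MeasurableSpace Ω] {μ : Measure Ω} [IsProbabilityMeasure μ]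

lemma rsrpAux_integrable_bdd {f : Ω → ℝ} (hf : Measurable f) (C : ℝ) (h : ∀ x, |f x| ≤ C) :
    Integrable f μ :=
  (integrable_const C).mono' hf.aestronglyMeasurable
    (ae_of_all _ fun x => by rw [Real.norm_eq_abs]; exact h x)

lemma rsrpAux_cos_add_indep {X W : Ω → ℝ} (hX : Measurable X) (hW : Measurable W)
    (h : IndepFun X W μ) :
    ∫ x, Real.cos (X x + W x) ∂μ =
      (∫ x, Real.cos (X x) ∂μ) * (∫ x, Real.cos (W x) ∂μ)
        - (∫ x, Real.sin (X x) ∂μ) * (∫ x, Real.sin (W x) ∂μ) := by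
  have icX : Integrable (fun x => Real.cos (X x)) μ :=
    rsrpAux_integrable_bdd (Real.measurable_cos.comp hX) 1 fun x => Real.abs_cos_le_one _
  have icW : Integrable (fun x => Real.cos (W x)) μ :=
    rsrpAux_integrable_bdd (Real.measurable_cos.comp hW) 1 fun x => Real.abs_cos_le_one _
  have isX : Integrable (fun x => Real.sin (X x)) μ :=
    rsrpAux_integrable_bdd (Real.measurable_sin.comp hX) 1 fun x => Real.abs_sin_le_one _
  have isW : Integrable (fun x => Real.sin (W x)) μ :=
    rsrpAux_integrable_bdd (Real.measurable_sin.comp hW) 1 fun x => Real.abs_sin_le_one _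
  have hcc : IndepFun (fun x => Real.cos (X x)) (fun x => Real.cos (W x)) μ :=
    h.comp Real.measurable_cos Real.measurable_cos
  have hss : IndepFun (fun x => Real.sin (X x)) (fun x => Real.sin (W x)) μ :=
    h.comp Real.measurable_sin Real.measurable_sin
  have icc : Integrable (fun x => Real.cos (X x) * Real.cos (W x)) μ :=
    rsrpAux_integrable_bdd ((Real.measurable_cos.comp hX).mul (Real.measurable_cos.comp hW)) 1
      fun x => by rw [abs_mul]
                  exact mul_le_one₀ (Real.abs_cos_le_one _) (abs_nonneg _) (Real.abs_cos_le_one _)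
  have iss : Integrable (fun x => Real.sin (X x) * Real.sin (W x)) μ :=
    rsrpAux_integrable_bdd ((Real.measurable_sin.comp hX).mul (Real.measurable_sin.comp hW)) 1
      fun x => by rw [abs_mul]
                  exact mul_le_one₀ (Real.abs_sin_le_one _) (abs_nonneg _) (Real.abs_sin_le_one _)
  simp_rw [Real.cos_add]
  rw [integral_sub icc iss]
  congr 1
  · exact hcc.integral_fun_mul_eq_mul_integral icX.aestronglyMeasurable icW.aestronglyMeasurable
  · exact hss.integral_fun_mul_eq_mul_integral isX.aestronglyMeasurable isW.aestronglyMeasurable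

end Aux

lemma rsrpAux_indep_omega_rest {Ωs P K : Type*} [MeasurableSpace Ωs] {μ : Measure Ωs}
    {ω : P → Ωs → ℝ} {ε : K → Ωs → ℝ} (hωm : ∀ p, Measurable (ω p)) (hεm : ∀ k, Measurable (ε k))
    (hindep : iIndepFun (Sum.elim ω ε) μ)
    (p q : P) (k l : K) (hpq : p ≠ q) (C : ℝ) :
    IndepFun (ω p) (fun x => C + ε k x - ω q x - ε l x) μ := by
  classical
  have hmeas : ∀ i, Measurable (Sum.elim ω ε i) := by rintro (p' | k'); exacts [hωm p', hεm k']
  have hdisj : Disjoint ({Sum.inl p} : Finset (P ⊕ K))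
      ({Sum.inl q, Sum.inr k, Sum.inr l} : Finset (P ⊕ K)) := by
    simp [Finset.disjoint_left, hpq]
  have base := hindep.indepFun_finset _ _ hdisj hmeas
  have hkmem : (Sum.inr k : P ⊕ K) ∈ ({Sum.inl q, Sum.inr k, Sum.inr l} : Finset (P ⊕ K)) := by
    simp
  have hqmem : (Sum.inl q : P ⊕ K) ∈ ({Sum.inl q, Sum.inr k, Sum.inr l} : Finset (P ⊕ K)) := by
    simp
  have hlmem : (Sum.inr l : P ⊕ K) ∈ ({Sum.inl q, Sum.inr k, Sum.inr l} : Finset (P ⊕ K)) := by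
    simp
  have hφ : Measurable (fun v : ({Sum.inl p} : Finset (P ⊕ K)) → ℝ =>
      v ⟨Sum.inl p, Finset.mem_singleton_self _⟩) := measurable_pi_apply _
  have hψ : Measurable (fun v : ({Sum.inl q, Sum.inr k, Sum.inr l} : Finset (P ⊕ K)) → ℝ =>
      C + v ⟨Sum.inr k, hkmem⟩ - v ⟨Sum.inl q, hqmem⟩ - v ⟨Sum.inr l, hlmem⟩) := by
    fun_prop
  exact base.comp hφ hψ

lemma rsrpAux_indep_eps_pair {Ωs P K : Type*} [MeasurableSpace Ωs] {μ : Measure Ωs}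
    {ω : P → Ωs → ℝ} {ε : K → Ωs → ℝ}
    (hindep : iIndepFun (Sum.elim ω ε) μ)
    (k l : K) (hkl : k ≠ l) (C : ℝ) :
    IndepFun (fun x => C + ε k x) (fun x => -(ε l x)) μ := by
  have base : IndepFun (ε k) (ε l) μ :=
    hindep.indepFun (i := Sum.inr k) (j := Sum.inr l) (by simp [hkl])
  exact base.comp (measurable_const_add C) measurable_neg

lemma rsrpAux_sum_sq_expand {P K : Type*} [Fintype P] [Fintype K] (ρ : ℝ) (c : P → ℝ)
    (A : P → K → ℝ) :
    ρ * ((∑ p, c p * ∑ k, Real.cos (A p k)) ^ 2 + (∑ p, c p * ∑ k, Real.sin (A p k)) ^ 2)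
      = ∑ p, ∑ q, ∑ k, ∑ l, ρ * (c p * c q) * Real.cos (A p k - A q l) := by
  have hL1 : (∑ p, c p * ∑ k, Real.cos (A p k)) = ∑ i : P × K, c i.1 * Real.cos (A i.1 i.2) := by
    rw [← Finset.univ_product_univ, Finset.sum_product]
    simp [Finset.mul_sum]
  have hL2 : (∑ p, c p * ∑ k, Real.sin (A p k)) = ∑ i : P × K, c i.1 * Real.sin (A i.1 i.2) := by
    rw [← Finset.univ_product_univ, Finset.sum_product]
    simp [Finset.mul_sum]
  have hR : ∀ p : P, (∑ q : P, ∑ k : K, ∑ l : K, ρ * (c p * c q) * Real.cos (A p k - A q l))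
      = ∑ k : K, ∑ q : P, ∑ l : K, ρ * (c p * c q) * Real.cos (A p k - A q l) := fun p =>
    Finset.sum_comm
  rw [hL1, hL2]
  simp only [hR]
  rw [show (∑ p : P, ∑ k : K, ∑ q : P, ∑ l : K, ρ * (c p * c q) * Real.cos (A p k - A q l))
      = ∑ i : P × K, ∑ j : P × K, ρ * (c i.1 * c j.1) * Real.cos (A i.1 i.2 - A j.1 j.2) by
    rw [← Finset.univ_product_univ, Finset.sum_product]
    exact Finset.sum_congr rfl fun p _ => Finset.sum_congr rfl fun k _ =>
      (Finset.sum_product (f := fun j : P × K =>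
        ρ * (c p * c j.1) * Real.cos (A p k - A j.1 j.2)) ..).symm]
  simp only [sq, Finset.sum_mul_sum, mul_add, ← Finset.sum_add_distrib, Real.cos_sub,
    Finset.mul_sum, Finset.sum_mul]
  exact Finset.sum_congr rfl fun i _ => Finset.sum_congr rfl fun j _ => by ring

lemma rsrpAux_diag_sum {K : Type*} [Fintype K] [DecidableEq K] (E : ℝ) (d : K → ℝ) :
    (∑ k : K, ∑ l : K, (if k = l then (1:ℝ) else Real.cos (d k - d l) * E))
      = (Fintype.card K : ℝ) * (1 - E) + E * ∑ k : K, ∑ l : K, Real.cos (d k - d l) := by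
  classical
  have h : ∀ k l : K, (if k = l then (1:ℝ) else Real.cos (d k - d l) * E)
      = Real.cos (d k - d l) * E + (if k = l then 1 - E else 0) := by
    intro k l
    by_cases hkl : k = l
    · subst hkl; rw [if_pos rfl, if_pos rfl, sub_self, Real.cos_zero]; ring
    · rw [if_neg hkl, if_neg hkl, add_zero]
  simp_rw [h, Finset.sum_add_distrib, Finset.sum_ite_eq, Finset.mem_univ, if_pos,
    Finset.sum_const, Finset.card_univ, nsmul_eq_mul, ← Finset.sum_mul]
  ring

/-- conditional, fixed-gain form of Theorem 1: with deterministic nonnegative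
channel gains `a_p`, i.i.d. per-path phases `ω_p` uniform on `[-π, π]`, i.i.d. per-antenna
Gaussian phase errors `ε_k ~ N(0, σ²)`, the two families independent of each other (encoded
as mutual independence of the combined family over `P ⊕ K`),
`E[ρ ((Σ_p √a_p g_p Σ_k cos(ψ_{p,k} + ω_p + ε_k))² + (Σ_p √a_p g_p Σ_k sin(ψ_{p,k} + ω_p + ε_k))²)]
  = Σ_p ρ g_p² (n (1 − e^{−σ²}) + e^{−σ²} Σ_k Σ_l cos(ψ_{p,k} − ψ_{p,l})) a_p`,
where `n = |K|`. -/
theorem expected_rsrp_fixed_gains {Ωs : Type*} [MeasurableSpace Ωs]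
    (μ : Measure Ωs) [IsProbabilityMeasure μ]
    {P K : Type*} [Fintype P] [Nonempty P] [Fintype K] [Nonempty K]
    (ρ σ : ℝ) (hρ : 0 ≤ ρ) (hσ : 0 ≤ σ)
    (a : P → ℝ) (ha : ∀ p, 0 ≤ a p) (g : P → ℝ) (ψ : P × K → ℝ)
    (ω : P → Ωs → ℝ) (ε : K → Ωs → ℝ)
    (hωm : ∀ p, Measurable (ω p)) (hεm : ∀ k, Measurable (ε k))
    (hindep : iIndepFun (Sum.elim ω ε) μ)
    (hωdist : ∀ p, μ.map (ω p) = uniformNegPiPi)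
    (hεdist : ∀ k, μ.map (ε k) = gaussianReal 0 (σ ^ 2).toNNReal) :
    ∫ x, ρ *
        ((∑ p, Real.sqrt (a p) * g p * ∑ k, Real.cos (ψ (p, k) + ω p x + ε k x)) ^ 2 +
          (∑ p, Real.sqrt (a p) * g p * ∑ k, Real.sin (ψ (p, k) + ω p x + ε k x)) ^ 2) ∂μ =
      ∑ p, ρ * g p ^ 2 *
          ((Fintype.card K : ℝ) * (1 - Real.exp (-σ ^ 2)) +
            Real.exp (-σ ^ 2) * ∑ k, ∑ l, Real.cos (ψ (p, k) - ψ (p, l))) * a p := by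
  classical
  have hvr : (((σ ^ 2).toNNReal : ℝ)) = σ ^ 2 := Real.coe_toNNReal _ (sq_nonneg σ)
  -- single-variable expectations
  have hoc : ∀ p : P, ∫ x, Real.cos (ω p x) ∂μ = 0 := by
    intro p
    rw [show ∫ x, Real.cos (ω p x) ∂μ = ∫ y, Real.cos y ∂(μ.map (ω p)) from
      (integral_map (hωm p).aemeasurable Real.measurable_cos.aestronglyMeasurable).symm,
      hωdist p, rsrpAux_uniform_cos]
  have hos : ∀ p : P, ∫ x, Real.sin (ω p x) ∂μ = 0 := by
    intro p
    rw [show ∫ x, Real.sin (ω p x) ∂μ = ∫ y, Real.sin y ∂(μ.map (ω p)) from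
      (integral_map (hωm p).aemeasurable Real.measurable_sin.aestronglyMeasurable).symm,
      hωdist p, rsrpAux_uniform_sin]
  have hec : ∀ k : K, ∫ x, Real.cos (ε k x) ∂μ = Real.exp (-(σ ^ 2)/2) := by
    intro k
    rw [show ∫ x, Real.cos (ε k x) ∂μ = ∫ y, Real.cos y ∂(μ.map (ε k)) from
      (integral_map (hεm k).aemeasurable Real.measurable_cos.aestronglyMeasurable).symm,
      hεdist k, rsrpAux_gauss_cos, hvr]
  have hes : ∀ k : K, ∫ x, Real.sin (ε k x) ∂μ = 0 := by
    intro k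
    rw [show ∫ x, Real.sin (ε k x) ∂μ = ∫ y, Real.sin y ∂(μ.map (ε k)) from
      (integral_map (hεm k).aemeasurable Real.measurable_sin.aestronglyMeasurable).symm,
      hεdist k, rsrpAux_gauss_sin]
  -- shifted gaussian expectations
  have hgc : ∀ (k : K) (Δ : ℝ),
      ∫ x, Real.cos (Δ + ε k x) ∂μ = Real.cos Δ * Real.exp (-(σ ^ 2)/2) := by
    intro k Δ
    have igc : Integrable (fun x => Real.cos Δ * Real.cos (ε k x)) μ :=
      (rsrpAux_integrable_bdd (Real.measurable_cos.comp (hεm k)) 1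
        fun x => Real.abs_cos_le_one _).const_mul _
    have igs : Integrable (fun x => Real.sin Δ * Real.sin (ε k x)) μ :=
      (rsrpAux_integrable_bdd (Real.measurable_sin.comp (hεm k)) 1
        fun x => Real.abs_sin_le_one _).const_mul _
    simp_rw [Real.cos_add]
    rw [integral_sub igc igs, integral_const_mul, integral_const_mul, hec k, hes k, mul_zero,
      sub_zero]
  -- per-term integrals
  have hJ0 : ∀ (p q : P) (k l : K), p ≠ q →
      ∫ x, Real.cos (ψ (p, k) + ω p x + ε k x - (ψ (q, l) + ω q x + ε l x)) ∂μ = 0 := by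
    intro p q k l hpq
    have hW : Measurable (fun x => ψ (p, k) - ψ (q, l) + ε k x - ω q x - ε l x) := by
      have := hεm k; have := hωm q; have := hεm l
      fun_prop
    have harg : ∀ x, ψ (p, k) + ω p x + ε k x - (ψ (q, l) + ω q x + ε l x)
        = ω p x + (ψ (p, k) - ψ (q, l) + ε k x - ω q x - ε l x) := fun x => by ring
    simp_rw [harg]
    rw [rsrpAux_cos_add_indep (hωm p) hW
      (rsrpAux_indep_omega_rest hωm hεm hindep p q k l hpq _), hoc p, hos p]
    ring
  have hJdiag : ∀ (p : P) (k l : K), k ≠ l →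
      ∫ x, Real.cos (ψ (p, k) + ω p x + ε k x - (ψ (p, l) + ω p x + ε l x)) ∂μ
        = Real.cos (ψ (p, k) - ψ (p, l)) * Real.exp (-σ ^ 2) := by
    intro p k l hkl
    have harg : ∀ x, ψ (p, k) + ω p x + ε k x - (ψ (p, l) + ω p x + ε l x)
        = (ψ (p, k) - ψ (p, l) + ε k x) + (-(ε l x)) := fun x => by ring
    simp_rw [harg]
    rw [rsrpAux_cos_add_indep (W := fun x => -(ε l x)) ((hεm k).const_add _) (hεm l).neg
      (rsrpAux_indep_eps_pair hindep k l hkl _)]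
    have h2 : ∫ x, Real.cos (-(ε l x)) ∂μ = Real.exp (-(σ ^ 2)/2) := by
      simp_rw [Real.cos_neg]; exact hec l
    have h3 : ∫ x, Real.sin (-(ε l x)) ∂μ = 0 := by
      simp_rw [Real.sin_neg]; rw [integral_neg, hes l, neg_zero]
    rw [hgc k (ψ (p, k) - ψ (p, l)), h2, h3, mul_zero, sub_zero, mul_assoc, ← Real.exp_add]
    norm_num
  have hJ1 : ∀ (p : P) (k : K),
      ∫ x, Real.cos (ψ (p, k) + ω p x + ε k x - (ψ (p, k) + ω p x + ε k x)) ∂μ = 1 := by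
    intro p k
    simp
  -- expand the square
  have hpt : (fun x => ρ *
        ((∑ p, Real.sqrt (a p) * g p * ∑ k, Real.cos (ψ (p, k) + ω p x + ε k x)) ^ 2 +
          (∑ p, Real.sqrt (a p) * g p * ∑ k, Real.sin (ψ (p, k) + ω p x + ε k x)) ^ 2))
      = fun x => ∑ p, ∑ q, ∑ k, ∑ l,
          ρ * (Real.sqrt (a p) * g p * (Real.sqrt (a q) * g q)) *
            Real.cos (ψ (p, k) + ω p x + ε k x - (ψ (q, l) + ω q x + ε l x)) :=
    funext fun x => rsrpAux_sum_sq_expand ρ (fun p => Real.sqrt (a p) * g p)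
      (fun p k => ψ (p, k) + ω p x + ε k x)
  rw [hpt]
  -- integrability of each term
  have hAm : ∀ (p : P) (k : K), Measurable (fun x => ψ (p, k) + ω p x + ε k x) :=
    fun p k => ((hωm p).const_add _).add (hεm k)
  have hIntF : ∀ (p q : P) (k l : K), Integrable (fun x =>
      ρ * (Real.sqrt (a p) * g p * (Real.sqrt (a q) * g q)) *
        Real.cos (ψ (p, k) + ω p x + ε k x - (ψ (q, l) + ω q x + ε l x))) μ := by
    intro p q k l
    refine rsrpAux_integrable_bdd
      ((((hAm p k).sub (hAm q l)).cos).const_mul _)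
      (|ρ * (Real.sqrt (a p) * g p * (Real.sqrt (a q) * g q))|) fun x => ?_
    rw [abs_mul]
    exact mul_le_of_le_one_right (abs_nonneg _) (Real.abs_cos_le_one _)
  rw [integral_finset_sum _ fun p _ => integrable_finset_sum _ fun q _ =>
    integrable_finset_sum _ fun k _ => integrable_finset_sum _ fun l _ => hIntF p q k l]
  refine Finset.sum_congr rfl fun p _ => ?_
  rw [integral_finset_sum _ fun q _ => integrable_finset_sum _ fun k _ =>
    integrable_finset_sum _ fun l _ => hIntF p q k l]
  rw [Finset.sum_eq_single_of_mem p (Finset.mem_univ p) (fun q _ hq => by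
    rw [integral_finset_sum _ fun k _ => integrable_finset_sum _ fun l _ => hIntF p q k l]
    refine Finset.sum_eq_zero fun k _ => ?_
    rw [integral_finset_sum _ fun l _ => hIntF p q k l]
    refine Finset.sum_eq_zero fun l _ => ?_
    rw [integral_const_mul, hJ0 p q k l (Ne.symm hq), mul_zero])]
  rw [integral_finset_sum _ fun k _ => integrable_finset_sum _ fun l _ => hIntF p p k l]
  have hterm : ∀ k l : K,
      ∫ x, ρ * (Real.sqrt (a p) * g p * (Real.sqrt (a p) * g p)) *
        Real.cos (ψ (p, k) + ω p x + ε k x - (ψ (p, l) + ω p x + ε l x)) ∂μ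
      = ρ * (Real.sqrt (a p) * g p * (Real.sqrt (a p) * g p)) *
          (if k = l then (1:ℝ) else Real.cos (ψ (p, k) - ψ (p, l)) * Real.exp (-σ ^ 2)) := by
    intro k l
    rw [integral_const_mul]
    by_cases hkl : k = l
    · subst hkl; rw [if_pos rfl, hJ1 p k]
    · rw [if_neg hkl, hJdiag p k l hkl]
  calc ∑ k : K, ∫ x, ∑ l : K, ρ * (Real.sqrt (a p) * g p * (Real.sqrt (a p) * g p)) *
          Real.cos (ψ (p, k) + ω p x + ε k x - (ψ (p, l) + ω p x + ε l x)) ∂μ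
      = ∑ k : K, ∑ l : K, ρ * (Real.sqrt (a p) * g p * (Real.sqrt (a p) * g p)) *
          (if k = l then (1:ℝ) else Real.cos (ψ (p, k) - ψ (p, l)) * Real.exp (-σ ^ 2)) := by
        refine Finset.sum_congr rfl fun k _ => ?_
        rw [integral_finset_sum _ fun l _ => hIntF p p k l]
        exact Finset.sum_congr rfl fun l _ => hterm k l
    _ = ρ * (Real.sqrt (a p) * g p * (Real.sqrt (a p) * g p)) *
          ∑ k : K, ∑ l : K,
            (if k = l then (1:ℝ) else Real.cos (ψ (p, k) - ψ (p, l)) * Real.exp (-σ ^ 2)) := by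
        simp_rw [Finset.mul_sum]
    _ = ρ * g p ^ 2 *
          ((Fintype.card K : ℝ) * (1 - Real.exp (-σ ^ 2)) +
            Real.exp (-σ ^ 2) * ∑ k, ∑ l, Real.cos (ψ (p, k) - ψ (p, l))) * a p := by
        rw [rsrpAux_diag_sum (Real.exp (-σ ^ 2)) (fun k => ψ (p, k))]
        have hsq : Real.sqrt (a p) * Real.sqrt (a p) = a p := Real.mul_self_sqrt (ha p)
        rw [show Real.sqrt (a p) * g p * (Real.sqrt (a p) * g p)
          = Real.sqrt (a p) * Real.sqrt (a p) * g p ^ 2 from by ring, hsq]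
        ring
end

section
/- Let K be a finite index set with |K| = n, let σ ≥ 0, let ψ : K → ℝ, and let (ε_k)_{k∈K} be i.i.d. real random variables with distribution N(0, σ²). Then E[ (Σ_{k∈K} cos(ψ_k + ε_k))² + (Σ_{k∈K} sin(ψ_k + ε_k))² ] = n·(1 − e^{−σ²}) + e^{−σ²} · Σ_{k∈K} Σ_{l∈K} cos(ψ_k − ψ_l). -/
open MeasureTheory ProbabilityTheory Real Complex
open scoped NNReal ENNReal

lemma gaussian_fourier_real {b : ℝ} (hb : 0 < b) :
    (∫ x : ℝ, Real.cos x * rexp (-b * x ^ 2)) = Real.sqrt (π / b) * rexp (-(1 / (4 * b))) ∧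
    (∫ x : ℝ, Real.sin x * rexp (-b * x ^ 2)) = 0 := by
  have hb' : (0 : ℝ) < ((b : ℂ)).re := by simpa using hb
  have hFi : Integrable (fun x : ℝ => cexp (I * 1 * x) * cexp (-(b : ℂ) * x ^ 2)) := by
    have h := integrable_cexp_quadratic hb' I 0
    refine h.congr (Filter.Eventually.of_forall fun x => ?_)
    dsimp only
    rw [← Complex.exp_add]; ring_nf
  have hF := fourierIntegral_gaussian hb' (1 : ℂ)
  have hptw : ∀ x : ℝ, cexp (I * 1 * x) * cexp (-(b : ℂ) * x ^ 2) =
      ((Real.cos x * rexp (-b * x ^ 2) : ℝ) : ℂ) +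
        ((Real.sin x * rexp (-b * x ^ 2) : ℝ) : ℂ) * I := by
    intro x
    rw [mul_one, mul_comm I (x : ℂ), Complex.exp_mul_I,
      show (-(b : ℂ) * (x : ℂ) ^ 2) = ((-b * x ^ 2 : ℝ) : ℂ) by push_cast; ring,
      ← Complex.ofReal_exp]
    push_cast [← Complex.ofReal_cos, ← Complex.ofReal_sin]
    ring
  have hRHS : ((π : ℂ) / (b : ℂ)) ^ (1 / 2 : ℂ) * cexp (-(1:ℂ) ^ 2 / (4 * (b : ℂ))) =
      ((Real.sqrt (π / b) * rexp (-(1 / (4 * b))) : ℝ) : ℂ) := by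
    have h1 : ((π : ℂ) / (b : ℂ)) = ((π / b : ℝ) : ℂ) := by push_cast; ring
    have h2 : (-(1:ℂ) ^ 2 / (4 * (b : ℂ))) = ((-(1 / (4 * b)) : ℝ) : ℂ) := by
      push_cast; field_simp
    rw [h1, h2, ← Complex.ofReal_exp,
      show (1 / 2 : ℂ) = ((1 / 2 : ℝ) : ℂ) by norm_num,
      ← Complex.ofReal_cpow (by positivity), Real.sqrt_eq_rpow]
    push_cast
    ring
  have hEq : (∫ x : ℝ, cexp (I * 1 * x) * cexp (-(b : ℂ) * x ^ 2)) =
      ((Real.sqrt (π / b) * rexp (-(1 / (4 * b))) : ℝ) : ℂ) := by rw [hF, hRHS]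
  have hre' := integral_re (𝕜 := ℂ) hFi
  have him' := integral_im (𝕜 := ℂ) hFi
  simp only [RCLike.re_to_complex, RCLike.im_to_complex] at hre' him'
  have hc : ∀ x : ℝ, Real.cos x * rexp (-b * x ^ 2) =
      (cexp (I * 1 * x) * cexp (-(b : ℂ) * x ^ 2)).re := fun x => by
    rw [hptw x]
    simp only [Complex.add_re, Complex.mul_re, Complex.ofReal_re, Complex.ofReal_im,
      Complex.I_re, Complex.I_im, mul_zero, mul_one, zero_mul, sub_zero, add_zero,
      zero_sub, zero_add, neg_zero]
  have hs : ∀ x : ℝ, Real.sin x * rexp (-b * x ^ 2) =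
      (cexp (I * 1 * x) * cexp (-(b : ℂ) * x ^ 2)).im := fun x => by
    rw [hptw x]
    simp only [Complex.add_im, Complex.mul_im, Complex.ofReal_re, Complex.ofReal_im,
      Complex.I_re, Complex.I_im, mul_zero, mul_one, zero_mul, sub_zero, add_zero,
      zero_sub, zero_add, neg_zero]
  constructor
  · rw [integral_congr_ae (Filter.Eventually.of_forall hc), hre', hEq, Complex.ofReal_re]
  · rw [integral_congr_ae (Filter.Eventually.of_forall hs), him', hEq, Complex.ofReal_im]

lemma integral_cos_sin_gaussianReal (v : ℝ≥0) :
    (∫ x, Real.cos x ∂(gaussianReal 0 v)) = rexp (-(v : ℝ) / 2) ∧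
    (∫ x, Real.sin x ∂(gaussianReal 0 v)) = 0 := by
  by_cases hv : v = 0
  · subst hv; simp
  · have hv0 : ((v : ℝ)) ≠ 0 := by exact_mod_cast hv
    have hv' : (0 : ℝ) < v := lt_of_le_of_ne v.coe_nonneg (Ne.symm hv0)
    set b : ℝ := (2 * (v : ℝ))⁻¹ with hbdef
    have hb : 0 < b := by positivity
    obtain ⟨h1, h2⟩ := gaussian_fourier_real hb
    have hmap : ∀ g : ℝ → ℝ, (∫ x, g x ∂(gaussianReal 0 v)) =
        ∫ x, gaussianPDFReal 0 v x * g x := by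
      intro g
      rw [gaussianReal_of_var_ne_zero _ hv]
      have hpdf : gaussianPDF 0 v = fun x => ((gaussianPDFReal 0 v x).toNNReal : ℝ≥0∞) := rfl
      rw [hpdf, integral_withDensity_eq_integral_smul
        (measurable_gaussianPDFReal 0 v).real_toNNReal g]
      refine integral_congr_ae (Filter.Eventually.of_forall fun x => ?_)
      dsimp only
      rw [NNReal.smul_def, smul_eq_mul, Real.coe_toNNReal _ (gaussianPDFReal_nonneg 0 v x)]
    have hpdfd : ∀ x : ℝ, gaussianPDFReal 0 v x =
        (Real.sqrt (2 * π * v))⁻¹ * rexp (-b * x ^ 2) := by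
      intro x
      rw [gaussianPDFReal]
      congr 1
      rw [hbdef]
      field_simp
      rw [sub_zero]
    have hπb : π / b = 2 * π * v := by rw [hbdef]; field_simp
    have h4b : 1 / (4 * b) = (v : ℝ) / 2 := by rw [hbdef]; field_simp; ring
    have hs0 : Real.sqrt (2 * π * v) ≠ 0 := by
      refine ne_of_gt (Real.sqrt_pos.2 ?_)
      have := Real.pi_pos
      positivity
    constructor
    · rw [hmap Real.cos]
      have hc : ∀ x : ℝ, gaussianPDFReal 0 v x * Real.cos x =
          (Real.sqrt (2 * π * v))⁻¹ * (Real.cos x * rexp (-b * x ^ 2)) := fun x => by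
        rw [hpdfd]; ring
      rw [integral_congr_ae (Filter.Eventually.of_forall hc), integral_const_mul, h1, hπb, h4b,
        ← mul_assoc, inv_mul_cancel₀ hs0, one_mul, neg_div]
    · rw [hmap Real.sin]
      have hs : ∀ x : ℝ, gaussianPDFReal 0 v x * Real.sin x =
          (Real.sqrt (2 * π * v))⁻¹ * (Real.sin x * rexp (-b * x ^ 2)) := fun x => by
        rw [hpdfd]; ring
      rw [integral_congr_ae (Filter.Eventually.of_forall hs), integral_const_mul, h2, mul_zero]
/-- for i.i.d. Gaussian phase errors `ε_k ~ N(0, σ²)` and phases `ψ_k`,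
`E[(Σ_k cos (ψ_k + ε_k))² + (Σ_k sin (ψ_k + ε_k))²]
  = n (1 − e^{−σ²}) + e^{−σ²} Σ_k Σ_l cos (ψ_k − ψ_l)`, where `n = |K|`. -/
theorem integral_sq_sum_cos_add_sq_sum_sin_gaussian {Ω : Type*} [MeasurableSpace Ω]
    (μ : Measure Ω) [IsProbabilityMeasure μ]
    {K : Type*} [Fintype K] (σ : ℝ) (hσ : 0 ≤ σ) (ψ : K → ℝ) (ε : K → Ω → ℝ)
    (hεm : ∀ k, Measurable (ε k))
    (hεind : iIndepFun ε μ)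
    (hεdist : ∀ k, μ.map (ε k) = gaussianReal 0 (σ ^ 2).toNNReal) :
    ∫ x, ((∑ k, Real.cos (ψ k + ε k x)) ^ 2 + (∑ k, Real.sin (ψ k + ε k x)) ^ 2) ∂μ =
      (Fintype.card K : ℝ) * (1 - Real.exp (-σ ^ 2)) +
        Real.exp (-σ ^ 2) * ∑ k, ∑ l, Real.cos (ψ k - ψ l) := by
  classical
  have hv : (((σ ^ 2).toNNReal : ℝ≥0) : ℝ) = σ ^ 2 := Real.coe_toNNReal _ (sq_nonneg σ)
  obtain ⟨hcosg, hsing⟩ := integral_cos_sin_gaussianReal (σ ^ 2).toNNReal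
  rw [hv] at hcosg
  have hcosk : ∀ k, (∫ x, Real.cos (ε k x) ∂μ) = rexp (-σ ^ 2 / 2) := fun k => by
    rw [← hcosg, ← hεdist k,
      integral_map (hεm k).aemeasurable Real.measurable_cos.aestronglyMeasurable]
  have hsink : ∀ k, (∫ x, Real.sin (ε k x) ∂μ) = 0 := fun k => by
    rw [← hsing, ← hεdist k,
      integral_map (hεm k).aemeasurable Real.measurable_sin.aestronglyMeasurable]
  have hbd : ∀ (g : Ω → ℝ), Measurable g → (∀ x, |g x| ≤ 1) → Integrable g μ := by
    intro g hg hb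
    exact (integrable_const (1 : ℝ)).mono' hg.aestronglyMeasurable
      (Filter.Eventually.of_forall fun x => by simpa using hb x)
  have hprod : ∀ (f g : ℝ → ℝ), Measurable f → Measurable g → ∀ k l : K, k ≠ l →
      (∫ x, f (ε k x) * g (ε l x) ∂μ) = (∫ x, f (ε k x) ∂μ) * (∫ x, g (ε l x) ∂μ) := by
    intro f g hf hg k l hkl
    exact IndepFun.integral_fun_mul_eq_mul_integral ((hεind.indepFun hkl).comp hf hg)
      (hf.comp (hεm k)).aestronglyMeasurable (hg.comp (hεm l)).aestronglyMeasurable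
  have habs : ∀ a b : ℝ, |a| ≤ 1 → |b| ≤ 1 → |a * b| ≤ 1 := by
    intro a b ha hb
    rw [abs_mul]
    exact mul_le_one₀ ha (abs_nonneg _) hb
  have key : ∀ k l : K, (∫ x, Real.cos (ψ k - ψ l + (ε k x - ε l x)) ∂μ)
      = if k = l then 1 else rexp (-σ ^ 2) * Real.cos (ψ k - ψ l) := by
    intro k l
    by_cases hkl : k = l
    · subst hkl
      simp [sub_self]
    · simp only [if_neg hkl]
      have hptw : ∀ x : Ω, Real.cos (ψ k - ψ l + (ε k x - ε l x)) =
          Real.cos (ψ k - ψ l) * (Real.cos (ε k x) * Real.cos (ε l x))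
          + Real.cos (ψ k - ψ l) * (Real.sin (ε k x) * Real.sin (ε l x))
          - Real.sin (ψ k - ψ l) * (Real.sin (ε k x) * Real.cos (ε l x))
          + Real.sin (ψ k - ψ l) * (Real.cos (ε k x) * Real.sin (ε l x)) := by
        intro x
        simp only [Real.cos_add, Real.cos_sub, Real.sin_sub]
        ring
      have i1 : Integrable (fun x => Real.cos (ε k x) * Real.cos (ε l x)) μ :=
        hbd _ ((hεm k).cos.mul ((hεm l).cos))
          (fun x => habs _ _ (Real.abs_cos_le_one _) (Real.abs_cos_le_one _))
      have i2 : Integrable (fun x => Real.sin (ε k x) * Real.sin (ε l x)) μ :=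
        hbd _ ((hεm k).sin.mul ((hεm l).sin))
          (fun x => habs _ _ (Real.abs_sin_le_one _) (Real.abs_sin_le_one _))
      have i3 : Integrable (fun x => Real.sin (ε k x) * Real.cos (ε l x)) μ :=
        hbd _ ((hεm k).sin.mul ((hεm l).cos))
          (fun x => habs _ _ (Real.abs_sin_le_one _) (Real.abs_cos_le_one _))
      have i4 : Integrable (fun x => Real.cos (ε k x) * Real.sin (ε l x)) μ :=
        hbd _ ((hεm k).cos.mul ((hεm l).sin))
          (fun x => habs _ _ (Real.abs_cos_le_one _) (Real.abs_sin_le_one _))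
      have e1 : ∫ x, Real.cos (ε k x) * Real.cos (ε l x) ∂μ = rexp (-σ ^ 2) := by
        rw [hprod _ _ Real.measurable_cos Real.measurable_cos k l hkl, hcosk, hcosk,
          ← Real.exp_add]
        ring_nf
      have e2 : ∫ x, Real.sin (ε k x) * Real.sin (ε l x) ∂μ = 0 := by
        rw [hprod _ _ Real.measurable_sin Real.measurable_sin k l hkl, hsink, zero_mul]
      have e3 : ∫ x, Real.sin (ε k x) * Real.cos (ε l x) ∂μ = 0 := by
        rw [hprod _ _ Real.measurable_sin Real.measurable_cos k l hkl, hsink, zero_mul]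
      have e4 : ∫ x, Real.cos (ε k x) * Real.sin (ε l x) ∂μ = 0 := by
        rw [hprod _ _ Real.measurable_cos Real.measurable_sin k l hkl, hsink, mul_zero]
      have iA : Integrable (fun x => Real.cos (ψ k - ψ l) * (Real.cos (ε k x) * Real.cos (ε l x))
          + Real.cos (ψ k - ψ l) * (Real.sin (ε k x) * Real.sin (ε l x))) μ :=
        (i1.const_mul _).add (i2.const_mul _)
      have iB : Integrable (fun x =>
          Real.cos (ψ k - ψ l) * (Real.cos (ε k x) * Real.cos (ε l x))
          + Real.cos (ψ k - ψ l) * (Real.sin (ε k x) * Real.sin (ε l x))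
          - Real.sin (ψ k - ψ l) * (Real.sin (ε k x) * Real.cos (ε l x))) μ :=
        iA.sub (i3.const_mul _)
      rw [integral_congr_ae (Filter.Eventually.of_forall hptw),
        integral_add iB (i4.const_mul _),
        integral_sub iA (i3.const_mul _),
        integral_add (i1.const_mul _) (i2.const_mul _),
        integral_const_mul, integral_const_mul, integral_const_mul, integral_const_mul,
        e1, e2, e3, e4]
      ring
  have hexp : ∀ x : Ω, ((∑ k, Real.cos (ψ k + ε k x)) ^ 2 + (∑ k, Real.sin (ψ k + ε k x)) ^ 2)
      = ∑ k, ∑ l, Real.cos (ψ k - ψ l + (ε k x - ε l x)) := by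
    intro x
    rw [sq, sq, Finset.sum_mul_sum, Finset.sum_mul_sum, ← Finset.sum_add_distrib]
    refine Finset.sum_congr rfl fun k _ => ?_
    rw [← Finset.sum_add_distrib]
    refine Finset.sum_congr rfl fun l _ => ?_
    rw [← Real.cos_sub]
    congr 1
    ring
  have iInt : ∀ k l : K, Integrable (fun x => Real.cos (ψ k - ψ l + (ε k x - ε l x))) μ := by
    intro k l
    exact hbd _ ((measurable_const.add ((hεm k).sub (hεm l))).cos)
      (fun x => Real.abs_cos_le_one _)
  rw [integral_congr_ae (Filter.Eventually.of_forall hexp),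
    integral_finset_sum _ (fun k _ => integrable_finset_sum _ (fun l _ => iInt k l))]
  have hswap : ∀ k : K, (∫ x, ∑ l, Real.cos (ψ k - ψ l + (ε k x - ε l x)) ∂μ)
      = ∑ l, ∫ x, Real.cos (ψ k - ψ l + (ε k x - ε l x)) ∂μ := fun k =>
    integral_finset_sum _ (fun l _ => iInt k l)
  simp_rw [hswap, key]
  have hsplit : ∀ k l : K, (if k = l then (1 : ℝ) else rexp (-σ ^ 2) * Real.cos (ψ k - ψ l))
      = rexp (-σ ^ 2) * Real.cos (ψ k - ψ l) + (if k = l then (1 - rexp (-σ ^ 2)) else 0) := by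
    intro k l
    by_cases h : k = l
    · subst h
      simp
    · simp [h]
  simp_rw [hsplit, Finset.sum_add_distrib, Finset.sum_ite_eq, Finset.mem_univ, if_true,
    Finset.sum_const, Finset.card_univ, nsmul_eq_mul, ← Finset.mul_sum]
  ring
end
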